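/- Let V be a horizontal vertex set in an augmented tree Σ. Then the shadow S(V) is connected if and only if the induced subcomplex Σ(V) is connected. -/

import Mathlib

/-- An augmented tree on the words `X*`: the tree of words (with vertical edges from
`v` to `xv`) augmented by a set of horizontal edges joining words of equal length, such
that the endpoints of a horizontal edge have truncations (deleting the first letter)
which either coincide or are again joined by a horizontal edge. -/
structure AugmentedTree (X : Type*) where
  horiz : List X → List X → Prop
  horiz_symm : ∀ u v, horiz u v → horiz v u
  horiz_irrefl : ∀ u, ¬ horiz u u
  horiz_length : ∀ u v, horiz u v → u.length = v.length
  horiz_push : ∀ (x y : X) (u v : List X), horiz (x :: u) (y :: v) → u = v ∨ horiz u v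

/-- The graph of an augmented tree: vertical tree edges together with horizontal edges. -/
def AugmentedTree.graph {X : Type*} (T : AugmentedTree X) : SimpleGraph (List X) where
  Adj u v := T.horiz u v ∨ (∃ x : X, v = x :: u) ∨ (∃ x : X, u = x :: v)
  symm := by
    constructor
    intro u v h
    rcases h with h | ⟨x, rfl⟩ | ⟨x, rfl⟩
    · exact Or.inl (T.horiz_symm u v h)
    · exact Or.inr (Or.inr ⟨x, rfl⟩)
    · exact Or.inr (Or.inl ⟨x, rfl⟩)
  loopless := by
    constructor
    intro u h
    rcases h with h | ⟨x, hx⟩ | ⟨x, hx⟩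
    · exact T.horiz_irrefl u h
    · have := congrArg List.length hx; simp at this
    · have := congrArg List.length hx; simp at this

/-- The cone over a word `v`: the set of words ending in `v`. -/
def Cone {X : Type*} (v : List X) : Set (List X) := {u | ∃ w : List X, u = w ++ v}

/-- The vertex set of the shadow `S(V)`: the union of the cones over elements of `V`. -/
def shadowSet {X : Type*} (V : Set (List X)) : Set (List X) := ⋃ v ∈ V, Cone v

lemma mem_shadow_iff {X : Type*} {V : Set (List X)} {u : List X} :
    u ∈ shadowSet V ↔ ∃ v ∈ V, ∃ w, u = w ++ v := by
  simp [shadowSet, Cone]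

lemma horiz_drop {X : Type*} (T : AugmentedTree X) :
    ∀ (k : ℕ) (u v : List X), T.horiz u v →
      u.drop k = v.drop k ∨ T.horiz (u.drop k) (v.drop k) := by
  intro k
  induction k with
  | zero => intro u v h; exact Or.inr h
  | succ k ih =>
    intro u v h
    match u, v with
    | [], [] => exact absurd h (T.horiz_irrefl [])
    | [], y :: v => have := T.horiz_length _ _ h; simp at this
    | x :: u, [] => have := T.horiz_length _ _ h; simp at this
    | x :: u, y :: v =>
      rcases T.horiz_push x y u v h with rfl | h'
      · exact Or.inl rfl
      · simpa using ih u v h'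

lemma reach_congr {α : Type*} {G : SimpleGraph α} {a b a' b' : α}
    (ha : a = a') (hb : b = b') (h : G.Reachable a b) : G.Reachable a' b' := by
  subst ha; subst hb; exact h

lemma drop_append_eq {X : Type*} {n : ℕ} (w v : List X) (hv : v.length = n) :
    (w ++ v).drop ((w ++ v).length - n) = v := by
  have h : (w ++ v).length - n = w.length := by simp [hv]
  rw [h, List.drop_left]

/-- The shadow `S(V)` of a horizontal vertex set `V` (as an induced subcomplex of the
augmented tree) is connected if and only if the induced subcomplex `Σ(V)` is connected. -/
theorem stmt9 {X : Type*} (T : AugmentedTree X) (n : ℕ) (V : Set (List X))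
    (hV : ∀ v ∈ V, v.length = n) :
    (T.graph.induce (shadowSet V)).Connected ↔ (T.graph.induce V).Connected := by
  classical
  have hsub : ∀ v ∈ V, v ∈ shadowSet V := fun v hv =>
    mem_shadow_iff.mpr ⟨v, hv, [], rfl⟩
  have hproj : ∀ u ∈ shadowSet V, u.drop (u.length - n) ∈ V ∧ n ≤ u.length := by
    intro u hu
    rcases mem_shadow_iff.mp hu with ⟨v, hvV, w, rfl⟩
    have hv := hV v hvV
    refine ⟨?_, ?_⟩
    · rw [drop_append_eq w v hv]; exact hvV
    · simp [hv]
  constructor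
  · intro hS
    rw [SimpleGraph.connected_iff] at hS ⊢
    obtain ⟨hpre, ⟨⟨u0, hu0⟩⟩⟩ := hS
    refine ⟨?_, ⟨⟨u0.drop (u0.length - n), (hproj u0 hu0).1⟩⟩⟩
    have key : ∀ a b : (shadowSet V : Set (List X)),
        (T.graph.induce (shadowSet V)).Reachable a b →
        (T.graph.induce V).Reachable
          ⟨a.1.drop (a.1.length - n), (hproj a.1 a.2).1⟩
          ⟨b.1.drop (b.1.length - n), (hproj b.1 b.2).1⟩ := by
      intro a b h
      obtain ⟨p⟩ := h
      induction p with
      | nil => exact SimpleGraph.Reachable.refl _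
      | @cons a b c hab p ih =>
        refine SimpleGraph.Reachable.trans ?_ ih
        have hadj : T.graph.Adj a.1 b.1 := hab
        have hna := (hproj a.1 a.2).2
        have hnb := (hproj b.1 b.2).2
        rcases hadj with hh | ⟨x, hx⟩ | ⟨x, hx⟩
        · have hlen := T.horiz_length _ _ hh
          rcases horiz_drop T (a.1.length - n) a.1 b.1 hh with he | hh'
          · have heq : (⟨a.1.drop (a.1.length - n), (hproj a.1 a.2).1⟩ :
                (V : Set (List X))) = ⟨b.1.drop (b.1.length - n), (hproj b.1 b.2).1⟩ :=
              Subtype.ext (by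
                show a.1.drop (a.1.length - n) = b.1.drop (b.1.length - n)
                rw [← hlen]; exact he)
            exact reach_congr rfl heq (SimpleGraph.Reachable.refl _)
          · refine SimpleGraph.Adj.reachable ?_
            show T.graph.Adj (a.1.drop (a.1.length - n)) (b.1.drop (b.1.length - n))
            refine Or.inl ?_
            rw [← hlen]
            exact hh'
        · -- b.1 = x :: a.1
          have heq : (⟨a.1.drop (a.1.length - n), (hproj a.1 a.2).1⟩ :
              (V : Set (List X))) = ⟨b.1.drop (b.1.length - n), (hproj b.1 b.2).1⟩ := by
            refine Subtype.ext ?_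
            show a.1.drop (a.1.length - n) = b.1.drop (b.1.length - n)
            rw [hx]
            have h2 : (x :: a.1).length - n = (a.1.length - n) + 1 := by
              simp; omega
            rw [h2, List.drop_succ_cons]
          exact reach_congr rfl heq (SimpleGraph.Reachable.refl _)
        · -- a.1 = x :: b.1
          have heq : (⟨a.1.drop (a.1.length - n), (hproj a.1 a.2).1⟩ :
              (V : Set (List X))) = ⟨b.1.drop (b.1.length - n), (hproj b.1 b.2).1⟩ := by
            refine Subtype.ext ?_
            show a.1.drop (a.1.length - n) = b.1.drop (b.1.length - n)
            rw [hx]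
            have h2 : (x :: b.1).length - n = (b.1.length - n) + 1 := by
              simp; omega
            rw [h2, List.drop_succ_cons]
          exact reach_congr rfl heq (SimpleGraph.Reachable.refl _)
    intro a b
    have h := key ⟨a.1, hsub a.1 a.2⟩ ⟨b.1, hsub b.1 b.2⟩
      (hpre ⟨a.1, hsub a.1 a.2⟩ ⟨b.1, hsub b.1 b.2⟩)
    have ea : (⟨a.1.drop (a.1.length - n),
        (hproj a.1 (hsub a.1 a.2)).1⟩ :
        (V : Set (List X))) = a := Subtype.ext (by
      show a.1.drop (a.1.length - n) = a.1
      rw [hV a.1 a.2]; simp)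
    have eb : (⟨b.1.drop (b.1.length - n),
        (hproj b.1 (hsub b.1 b.2)).1⟩ :
        (V : Set (List X))) = b := Subtype.ext (by
      show b.1.drop (b.1.length - n) = b.1
      rw [hV b.1 b.2]; simp)
    exact reach_congr ea eb h
  · intro hVc
    rw [SimpleGraph.connected_iff] at hVc ⊢
    obtain ⟨hpre, ⟨⟨v0, hv0⟩⟩⟩ := hVc
    refine ⟨?_, ⟨⟨v0, hsub v0 hv0⟩⟩⟩
    -- inclusion graph hom
    let ι : T.graph.induce V →g T.graph.induce (shadowSet V) :=
      ⟨fun v => ⟨v.1, hsub v.1 v.2⟩, fun {a b} h => h⟩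
    -- every point of a cone reaches its tip
    have cone : ∀ (w v : List X) (hv : v ∈ V),
        (T.graph.induce (shadowSet V)).Reachable
          ⟨w ++ v, mem_shadow_iff.mpr ⟨v, hv, w, rfl⟩⟩ ⟨v, hsub v hv⟩ := by
      intro w
      induction w with
      | nil => intro v hv; exact SimpleGraph.Reachable.refl _
      | cons x w ih =>
        intro v hv
        refine SimpleGraph.Reachable.trans ?_ (ih v hv)
        refine SimpleGraph.Adj.reachable ?_
        show T.graph.Adj (x :: (w ++ v)) (w ++ v)
        exact Or.inr (Or.inr ⟨x, rfl⟩)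
    intro a b
    obtain ⟨va, hva, wa, ha⟩ := mem_shadow_iff.mp a.2
    obtain ⟨vb, hvb, wb, hb⟩ := mem_shadow_iff.mp b.2
    have ea : a = ⟨wa ++ va, mem_shadow_iff.mpr ⟨va, hva, wa, rfl⟩⟩ := Subtype.ext ha
    have eb : b = ⟨wb ++ vb, mem_shadow_iff.mpr ⟨vb, hvb, wb, rfl⟩⟩ := Subtype.ext hb
    rw [ea, eb]
    refine (cone wa va hva).trans (SimpleGraph.Reachable.trans ?_ (cone wb vb hvb).symm)
    exact (hpre ⟨va, hva⟩ ⟨vb, hvb⟩).map ι
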